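/- arXiv:1103.5728 — 3 statements merged into one kernel-verified Lean document; each statement's English description precedes it below -/
import Mathlib

section
/- Let n ≥ 2 be an integer and let F be a field of characteristic zero. Then there exist a_1, …, a_{n−1} ∈ F such that the n−1 values P_{a,0}(a_1/n), P_{a,0}(a_2), …, P_{a,0}(a_{n−1}) are pairwise distinct. -/
open Polynomial

/-- `Q_a(x) = n (x - a₁/n)(x - a₂) ⋯ (x - a_{n-1})`, where the tuple
`(a₁, …, a_{n-1})` is given by the values `a 1, …, a (n-1)` of `a : ℕ → F`. -/
noncomputable def Qa (F : Type) [Field F] (n : ℕ) (a : ℕ → F) : Polynomial F :=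
  C (n : F) * (X - C (a 1 / (n : F))) * ∏ i ∈ Finset.Icc 2 (n - 1), (X - C (a i))

/-- `P_{a,b}`: the unique polynomial with derivative `Q_a` and constant coefficient `b`
(in characteristic zero). -/
noncomputable def Pab (F : Type) [Field F] (n : ℕ) (a : ℕ → F) (b : F) : Polynomial F :=
  C b + ∑ i ∈ Finset.range ((Qa F n a).natDegree + 1),
    C ((Qa F n a).coeff i / ((i : F) + 1)) * X ^ (i + 1)

noncomputable def antider {F : Type} [Field F] (q : Polynomial F) : Polynomial F :=
  ∑ i ∈ Finset.range (q.natDegree + 1), C (q.coeff i / ((i : F) + 1)) * X ^ (i + 1)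

lemma antider_coeff_succ {F : Type} [Field F] (q : Polynomial F) (j : ℕ) :
    (antider q).coeff (j + 1) = q.coeff j / ((j : F) + 1) := by
  rw [antider, finset_sum_coeff]
  simp only [coeff_C_mul, coeff_X_pow, Nat.add_right_cancel_iff, mul_ite, mul_one, mul_zero]
  rw [Finset.sum_ite_eq (Finset.range (q.natDegree + 1)) j
    (fun i => q.coeff i / ((i : F) + 1))]
  by_cases h : j ∈ Finset.range (q.natDegree + 1)
  · simp [h]
  · rw [if_neg h]
    rw [Finset.mem_range] at h
    rw [coeff_eq_zero_of_natDegree_lt (by omega), zero_div]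

lemma antider_coeff_zero {F : Type} [Field F] (q : Polynomial F) :
    (antider q).coeff 0 = 0 := by
  rw [antider, finset_sum_coeff]
  simp

lemma derivative_antider {F : Type} [Field F] [CharZero F] (q : Polynomial F) :
    derivative (antider q) = q := by
  ext j
  rw [coeff_derivative, antider_coeff_succ]
  rw [div_mul_cancel₀ _ (Nat.cast_add_one_ne_zero j)]

lemma eq_of_deriv_eq {F : Type} [Field F] [CharZero F] {p q : Polynomial F}
    (h : derivative p = derivative q) (h0 : p.coeff 0 = q.coeff 0) : p = q := by
  have hd : derivative (p - q) = 0 := by rw [derivative_sub, h, sub_self]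
  have h2 := Polynomial.eq_C_of_derivative_eq_zero hd
  have h3 : p - q = 0 := by rw [h2, coeff_sub, h0, sub_self, map_zero]
  exact sub_eq_zero.mp h3

theorem exists_tuple_with_distinct_critical_values (F : Type) [Field F] [CharZero F]
    (n : ℕ) (hn : 2 ≤ n) :
    ∃ a : ℕ → F, Set.InjOn
      (fun i => (Pab F n a 0).eval (if i = 1 then a 1 / (n : F) else a i))
      (Set.Icc 1 (n - 1)) := by
  induction n, hn using Nat.le_induction with
  | base =>
    exact ⟨fun _ => 0, fun i hi j hj _ => by
      simp only [Set.mem_Icc] at hi hj; omega⟩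
  | succ n hn ih =>
    obtain ⟨a, ha⟩ := ih
    set Q : Polynomial F := Qa F n a with hQdef
    set P : Polynomial F := Pab F n a 0 with hPdef
    have hP : P = antider Q := by rw [hPdef, hQdef]; simp [Pab, antider]
    set W : Polynomial F := antider (X * Q) with hWdef
    set pt : ℕ → F := fun i => if i = 1 then a 1 / (n : F) else a i with hptdef
    have ha' : ∀ i ∈ Set.Icc 1 (n-1), ∀ j ∈ Set.Icc 1 (n-1),
        P.eval (pt i) = P.eval (pt j) → i = j := fun i hi j hj h => ha hi hj h
    have hn0 : (n : F) ≠ 0 := Nat.cast_ne_zero.mpr (by omega)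
    have hn1 : ((n : F) + 1) ≠ 0 := by
      have := Nat.cast_add_one_ne_zero (R := F) n; exact_mod_cast this
    have h1n : n - 1 + 1 = n := by omega
    -- leading coefficient facts
    have hQlc : Q.coeff (n - 1) = (n : F) := by
      have hMm : Monic ((X - C (a 1 / (n:F))) * ∏ i ∈ Finset.Icc 2 (n - 1), (X - C (a i))) :=
        (monic_X_sub_C _).mul (monic_prod_of_monic _ _ fun i _ => monic_X_sub_C _)
      have hMdeg : ((X - C (a 1 / (n:F))) * ∏ i ∈ Finset.Icc 2 (n - 1), (X - C (a i))).natDegree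
          = n - 1 := by
        rw [(monic_X_sub_C _).natDegree_mul (monic_prod_of_monic _ _ fun i _ => monic_X_sub_C _),
          natDegree_prod_of_monic _ _ (fun i _ => monic_X_sub_C _), natDegree_X_sub_C]
        simp only [natDegree_X_sub_C]
        rw [Finset.sum_const, Nat.card_Icc, smul_eq_mul, mul_one]
        omega
      have hQm : Q = C (n : F) *
          ((X - C (a 1 / (n:F))) * ∏ i ∈ Finset.Icc 2 (n - 1), (X - C (a i))) := by
        rw [hQdef, Qa, mul_assoc]
      have hlc := hMm.coeff_natDegree
      rw [hMdeg] at hlc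
      rw [hQm, coeff_C_mul, hlc, mul_one]
    have hPcn : P.coeff n = 1 := by
      rw [hP, ← h1n, antider_coeff_succ,
        show ((n - 1 : ℕ) : F) + 1 = ((n - 1 + 1 : ℕ) : F) by push_cast; ring, h1n, hQlc,
        div_self hn0]
    have hWc : W.coeff (n + 1) = (n : F) / ((n : F) + 1) := by
      rw [hWdef, antider_coeff_succ]
      rw [show n = n - 1 + 1 from h1n.symm, coeff_X_mul, hQlc]
      rw [h1n]
    -- collision polynomials
    set G : ℕ → Polynomial F := fun i =>
      C (W.eval (pt i)) - C (P.eval (pt i)) * X - (W - X * P) with hGdef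
    set H : ℕ → ℕ → Polynomial F := fun i j =>
      C (W.eval (pt i) - W.eval (pt j)) - C (P.eval (pt i) - P.eval (pt j)) * X with hHdef
    have hGne : ∀ i, G i ≠ 0 := by
      intro i hGz
      have hc : (G i).coeff (n + 1) = 0 := by rw [hGz]; simp
      rw [hGdef] at hc
      simp only [coeff_sub, coeff_C_mul, coeff_C, coeff_X, coeff_X_mul] at hc
      rw [if_neg (by omega : ¬ (1:ℕ) = n+1), mul_zero, hPcn, hWc] at hc
      rw [if_neg (by omega : ¬ n+1 = 0)] at hc
      have : (1 : F) - (n : F) / ((n : F) + 1) = 0 := by linear_combination hc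
      rw [sub_eq_zero, eq_comm, div_eq_iff hn1, one_mul] at this
      exact one_ne_zero (add_left_cancel (a := (n : F)) (by rw [add_zero]; exact this.symm))
    have hHne : ∀ i j, P.eval (pt i) ≠ P.eval (pt j) → H i j ≠ 0 := by
      intro i j hne hz
      have hc : (H i j).coeff 1 = 0 := by rw [hz]; simp
      rw [hHdef] at hc
      simp only [coeff_sub, coeff_C_mul, coeff_C, coeff_X] at hc
      rw [if_neg (by omega : ¬ (1:ℕ) = 0), zero_sub, neg_eq_zero, if_pos trivial, mul_one, sub_eq_zero] at hc
      exact hne hc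
    -- bad set
    set Bad : Set F :=
      (⋃ i ∈ Finset.Icc 1 (n-1), ⋃ j ∈ Finset.Icc 1 (n-1), {x | i ≠ j ∧ (H i j).IsRoot x}) ∪
      ⋃ i ∈ Finset.Icc 1 (n-1), {x | (G i).IsRoot x} with hBdef
    have hBfin : Bad.Finite := by
      rw [hBdef]
      apply Set.Finite.union
      · apply Set.Finite.biUnion (Finset.Icc 1 (n-1)).finite_toSet
        intro i hi
        apply Set.Finite.biUnion (Finset.Icc 1 (n-1)).finite_toSet
        intro j hj
        rcases eq_or_ne i j with rfl | hij
        · apply Set.Finite.subset Set.finite_empty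
          intro x hx; exact (hx.1 rfl).elim
        · have hi' : i ∈ Set.Icc 1 (n-1) := by
            simp only [Finset.coe_Icc] at hi; exact hi
          have hj' : j ∈ Set.Icc 1 (n-1) := by
            simp only [Finset.coe_Icc] at hj; exact hj
          exact Set.Finite.subset
            (Polynomial.finite_setOf_isRoot
              (hHne i j (fun hpe => hij (ha' i hi' j hj' hpe))))
            (fun x hx => hx.2)
      · exact Set.Finite.biUnion (Finset.Icc 1 (n-1)).finite_toSet
          (fun i _ => Polynomial.finite_setOf_isRoot (hGne i))
    obtain ⟨t, ht⟩ := hBfin.infinite_compl.nonempty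
    have hHt : ∀ i j, 1 ≤ i → i ≤ n-1 → 1 ≤ j → j ≤ n-1 → i ≠ j → (H i j).eval t ≠ 0 := by
      intro i j hi1 hi2 hj1 hj2 hij hev
      apply ht
      rw [hBdef]
      exact Set.mem_union_left _
        (Set.mem_iUnion₂.mpr ⟨i, Finset.mem_Icc.mpr ⟨hi1, hi2⟩,
          Set.mem_iUnion₂.mpr ⟨j, Finset.mem_Icc.mpr ⟨hj1, hj2⟩, ⟨hij, hev⟩⟩⟩)
    have hGt : ∀ i, 1 ≤ i → i ≤ n-1 → (G i).eval t ≠ 0 := by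
      intro i hi1 hi2 hev
      apply ht
      rw [hBdef]
      exact Set.mem_union_right _
        (Set.mem_iUnion₂.mpr ⟨i, Finset.mem_Icc.mpr ⟨hi1, hi2⟩, hev⟩)
    -- the new tuple
    set a2 : ℕ → F := fun i =>
      if i = 1 then ((n:F)+1) * (a 1 / (n:F)) else if i = n then t else a i with ha2
    refine ⟨a2, ?_⟩
    have hcast : ((n + 1 : ℕ) : F) = (n : F) + 1 := by push_cast; ring
    have ha2_1 : a2 1 = ((n:F)+1) * (a 1 / (n:F)) := by rw [ha2]; simp
    have ha2_n : a2 n = t := by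
      rw [ha2]; simp [show ¬ n = 1 by omega]
    have ha2_i : ∀ i, 2 ≤ i → i ≤ n - 1 → a2 i = a i := by
      intro i h2 h3
      rw [ha2]; simp [show ¬ i = 1 by omega, show ¬ i = n by omega]
    have hpt1 : a2 1 / ((n + 1 : ℕ) : F) = a 1 / (n : F) := by
      rw [ha2_1, hcast, mul_div_cancel_left₀ _ hn1]
    have hprod : ∏ i ∈ Finset.Icc 2 n, (X - C (a2 i))
        = (∏ i ∈ Finset.Icc 2 (n-1), (X - C (a i))) * (X - C t) := by
      rw [show Finset.Icc 2 n = Finset.Icc 2 (n-1+1) by rw [h1n],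
        Finset.prod_Icc_succ_top (by omega), h1n, ha2_n]
      congr 1
      exact Finset.prod_congr rfl fun i hi => by
        rw [Finset.mem_Icc] at hi; rw [ha2_i i hi.1 hi.2]
    have hQrec : C (n : F) * Qa F (n+1) a2 = C ((n : F) + 1) * ((X - C t) * Q) := by
      have h0 : Qa F (n+1) a2 = C ((n:F)+1) * (X - C (a 1 / (n:F))) *
          ((∏ i ∈ Finset.Icc 2 (n-1), (X - C (a i))) * (X - C t)) := by
        rw [Qa, Nat.add_sub_cancel, hprod, hpt1, hcast]
      rw [h0, hQdef, Qa]
      ring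
    have hPab2 : Pab F (n+1) a2 0 = antider (Qa F (n+1) a2) := by
      simp [Pab, antider]
    have hPrec : C (n : F) * Pab F (n+1) a2 0 = C ((n : F) + 1) * (W - C t * P) := by
      apply eq_of_deriv_eq
      · rw [derivative_C_mul, derivative_C_mul, hPab2, derivative_antider, derivative_sub,
          derivative_C_mul, hWdef, hP, derivative_antider, derivative_antider, hQrec]
        ring
      · rw [coeff_C_mul, coeff_C_mul, hPab2, antider_coeff_zero, coeff_sub, coeff_C_mul,
          hWdef, hP, antider_coeff_zero, antider_coeff_zero]
        ring
    have heval : ∀ x, (n:F) * (Pab F (n+1) a2 0).eval x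
        = ((n:F)+1) * (W.eval x - t * P.eval x) := by
      intro x
      have h := congrArg (eval x) hPrec
      simpa using h
    -- point bookkeeping
    have hx : ∀ i, 1 ≤ i → i ≤ n - 1 →
        (if i = 1 then a2 1 / ((n+1:ℕ) : F) else a2 i) = pt i := by
      intro i hi1 hi2
      by_cases hI : i = 1
      · subst hI
        rw [if_pos rfl, hpt1, hptdef]
        simp
      · rw [if_neg hI, ha2_i i (by omega) hi2, hptdef]
        simp [hI]
    have hxn : (if n = 1 then a2 1 / ((n+1:ℕ) : F) else a2 n) = t := by
      rw [if_neg (by omega), ha2_n]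
    -- final injectivity
    intro i hi j hj hval
    simp only [Set.mem_Icc, Nat.add_sub_cancel] at hi hj
    have hkey : W.eval (if i = 1 then a2 1 / ((n+1:ℕ) : F) else a2 i)
          - t * P.eval (if i = 1 then a2 1 / ((n+1:ℕ) : F) else a2 i)
        = W.eval (if j = 1 then a2 1 / ((n+1:ℕ) : F) else a2 j)
          - t * P.eval (if j = 1 then a2 1 / ((n+1:ℕ) : F) else a2 j) := by
      apply mul_left_cancel₀ hn1
      rw [← heval, ← heval]
      exact congrArg ((n:F) * ·) hval
    by_cases hin : i = n <;> by_cases hjn : j = n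
    · rw [hin, hjn]
    · exfalso
      rw [hin, hxn, hx j hj.1 (by omega)] at hkey
      apply hGt j hj.1 (by omega)
      rw [hGdef]
      simp only [eval_sub, eval_mul, eval_C, eval_X]
      linear_combination -hkey
    · exfalso
      rw [hjn, hxn, hx i hi.1 (by omega)] at hkey
      apply hGt i hi.1 (by omega)
      rw [hGdef]
      simp only [eval_sub, eval_mul, eval_C, eval_X]
      linear_combination hkey
    · by_cases hij : i = j
      · exact hij
      · exfalso
        rw [hx i hi.1 (by omega), hx j hj.1 (by omega)] at hkey
        apply hHt i j hi.1 (by omega) hj.1 (by omega) hij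
        rw [hHdef]
        simp only [eval_sub, eval_mul, eval_C, eval_X]
        linear_combination hkey
end

section
/- Let n ≥ 2 be an integer, let F be a field of characteristic zero, let a = (a_1, …, a_{n−1}) ∈ F^{n−1}, and let b ∈ F. Then the discriminant of P_{a,b} satisfies Δ_{a,b} = (−1)^{n(n−1)/2} · (n^n·P_{a,0}(a_1/n) + n^n·b) · ∏_{i=2}^{n−1} (P_{a,0}(a_i) + b). -/
open Polynomial

lemma deriv_Pab (F : Type) [Field F] [CharZero F] (n : ℕ) (a : ℕ → F) (b : F) :
    derivative (Pab F n a b) = Qa F n a := by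
  unfold Pab
  rw [derivative_add, derivative_C, zero_add, derivative_sum]
  have : ∀ i ∈ Finset.range ((Qa F n a).natDegree + 1),
      derivative (C ((Qa F n a).coeff i / ((i : F) + 1)) * X ^ (i + 1))
        = C ((Qa F n a).coeff i) * X ^ i := by
    intro i _
    rw [derivative_C_mul_X_pow]
    simp only [Nat.add_sub_cancel]
    congr 1
    rw [Nat.cast_add, Nat.cast_one]
    exact congrArg C <| div_mul_cancel₀ ((Qa F n a).coeff i) (Nat.cast_add_one_ne_zero i)
  rw [Finset.sum_congr rfl this, ← as_sum_range_C_mul_X_pow]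

lemma Pab_eq (F : Type) [Field F] (n : ℕ) (a : ℕ → F) (b : F) :
    Pab F n a b = C b + Pab F n a 0 := by
  simp [Pab]

lemma derivative_finset_prod {R : Type*} [CommSemiring R] {ι : Type*} [DecidableEq ι]
    (s : Finset ι) (f : ι → Polynomial R) :
    derivative (∏ i ∈ s, f i) = ∑ i ∈ s, (∏ j ∈ s.erase i, f j) * derivative (f i) := by
  induction s using Finset.induction_on with
  | empty => simp
  | insert _ _ h ih =>
    rename_i c s'
    rw [Finset.prod_insert h, derivative_mul, ih, Finset.sum_insert h, Finset.erase_insert h]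
    rw [Finset.mul_sum]
    congr 1
    · ring
    · refine Finset.sum_congr rfl fun i hi => ?_
      have hne : i ≠ c := fun e => h (e ▸ hi)
      rw [Finset.erase_insert_of_ne hne.symm,
        Finset.prod_insert (fun hc => h (Finset.mem_of_mem_erase hc))]
      ring

lemma sign_prod {K : Type} [Field K] (n : ℕ) (r : Fin n → K) :
    ∏ j, ∏ i ∈ ({j}ᶜ : Finset (Fin n)), (r j - r i)
      = (-1) ^ (n * (n - 1) / 2) * ∏ i, ∏ j ∈ Finset.Ioi i, (r i - r j) ^ 2 := by
  have h := Finset.prod_prod_Ioi_mul_eq_prod_prod_off_diag (f := fun i j : Fin n => r j - r i)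
  trans (∏ i : Fin n, ∏ j ∈ Finset.Ioi i, (r i - r j) * (r j - r i))
  · convert h.symm using 2 with j
  have h2 : ∀ i : Fin n, ∏ j ∈ Finset.Ioi i, (r i - r j) * (r j - r i)
      = (-1 : K) ^ (n - 1 - (i : ℕ)) * ∏ j ∈ Finset.Ioi i, (r i - r j) ^ 2 := by
    intro i
    calc ∏ j ∈ Finset.Ioi i, (r i - r j) * (r j - r i)
        = ∏ j ∈ Finset.Ioi i, (-1) * (r i - r j) ^ 2 := by
          refine Finset.prod_congr rfl fun j _ => by ring
      _ = (-1 : K) ^ (Finset.Ioi i).card * ∏ j ∈ Finset.Ioi i, (r i - r j) ^ 2 := by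
          rw [Finset.prod_mul_distrib, Finset.prod_const]
      _ = _ := by rw [Fin.card_Ioi]
  rw [Finset.prod_congr rfl fun i _ => h2 i, Finset.prod_mul_distrib]
  congr 1
  rw [Finset.prod_pow_eq_pow_sum]
  congr 1
  rw [Fin.sum_univ_eq_sum_range (fun i => n - 1 - i)]
  rw [show (∑ i ∈ Finset.range n, (n - 1 - i)) = ∑ i ∈ Finset.range n, i from
    Finset.sum_range_reflect (fun i => i) n]
  exact Finset.sum_range_id n

/-- The discriminant of `P_{a,b}` factors through the critical values of `P_{a,0}`:
for any enumeration `r` of the roots of `P_{a,b}` in an algebraic closure,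
`∏_{i<j} (rᵢ - rⱼ)² = (-1)^{n(n-1)/2} (nⁿ P_{a,0}(a₁/n) + nⁿ b) ∏_{i=2}^{n-1} (P_{a,0}(aᵢ) + b)`. -/
theorem disc_eq_product_of_critical_values (F : Type) [Field F] [CharZero F]
    (n : ℕ) (hn : 2 ≤ n) (a : ℕ → F) (b : F)
    (r : Fin n → AlgebraicClosure F)
    (hr : (Pab F n a b).map (algebraMap F (AlgebraicClosure F)) =
      ∏ i, (X - C (r i))) :
    (∏ i : Fin n, ∏ j ∈ Finset.Ioi i, (r i - r j) ^ 2) =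
      algebraMap F (AlgebraicClosure F)
        ((-1) ^ (n * (n - 1) / 2) *
          ((n : F) ^ n * (Pab F n a 0).eval (a 1 / (n : F)) + (n : F) ^ n * b) *
          ∏ i ∈ Finset.Icc 2 (n - 1), ((Pab F n a 0).eval (a i) + b)) := by
  set φ := algebraMap F (AlgebraicClosure F) with hφ
  -- derivative of the root product is the mapped Qa
  have hd : derivative (∏ i, (X - C (r i))) = (Qa F n a).map φ := by
    rw [← hr, derivative_map, deriv_Pab]
  -- evaluation of the derivative at each root
  have hev : ∀ j : Fin n, eval (r j) ((Qa F n a).map φ) =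
      ∏ i ∈ ({j}ᶜ : Finset (Fin n)), (r j - r i) := by
    intro j
    rw [← hd, derivative_finset_prod]
    simp only [derivative_sub, derivative_X, derivative_C, sub_zero, mul_one]
    rw [eval_finset_sum, Finset.sum_eq_single j]
    · rw [eval_prod]
      simp only [eval_sub, eval_X, eval_C]
      exact Finset.prod_congr (Finset.ext fun x => by
        simp [Finset.mem_erase, Finset.mem_compl, eq_comm]) fun _ _ => rfl
    · intro c _ hcj
      rw [eval_prod]
      exact Finset.prod_eq_zero (Finset.mem_erase.2 ⟨hcj.symm, Finset.mem_univ j⟩)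
        (by simp)
    · simp
  -- evaluation of mapped Pab at a point coming from F
  have key : ∀ x : F, ∏ j, (r j - φ x) = (-1 : AlgebraicClosure F) ^ n * φ (b + eval x (Pab F n a 0)) := by
    intro x
    have h1 : ∏ j, (φ x - r j) = φ (eval x (Pab F n a b)) := by
      rw [← eval₂_at_apply, ← eval_map, hr, eval_prod]
      simp
    calc ∏ j, (r j - φ x) = ∏ j : Fin n, (-1) * (φ x - r j) := by
          refine Finset.prod_congr rfl fun j _ => by ring
      _ = (-1 : AlgebraicClosure F) ^ n * ∏ j, (φ x - r j) := by
          rw [Finset.prod_mul_distrib, Finset.prod_const, Finset.card_univ, Fintype.card_fin]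
      _ = (-1 : AlgebraicClosure F) ^ n * φ (b + eval x (Pab F n a 0)) := by
          rw [h1, Pab_eq]; simp [add_comm]
  -- evaluation of mapped Qa explicitly
  have hQ : ∀ j : Fin n, eval (r j) ((Qa F n a).map φ) =
      (n : AlgebraicClosure F) * (r j - φ (a 1 / (n : F))) * ∏ k ∈ Finset.Icc 2 (n - 1), (r j - φ (a k)) := by
    intro j
    simp [Qa, Polynomial.map_mul, Polynomial.map_prod, eval_prod, map_natCast]
  -- the big product of critical values
  have hprod : ∏ j, ∏ i ∈ ({j}ᶜ : Finset (Fin n)), (r j - r i) =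
      φ ((n : F) ^ n * (b + eval (a 1 / (n : F)) (Pab F n a 0)) *
        ∏ k ∈ Finset.Icc 2 (n - 1), (b + eval (a k) (Pab F n a 0))) := by
    have e1 : ∏ j, ∏ i ∈ ({j}ᶜ : Finset (Fin n)), (r j - r i)
        = ∏ j, ((n : AlgebraicClosure F) * (r j - φ (a 1 / (n : F))) *
            ∏ k ∈ Finset.Icc 2 (n - 1), (r j - φ (a k))) :=
      Finset.prod_congr rfl fun j _ => by rw [← hQ j, hev j]
    rw [e1, Finset.prod_mul_distrib, Finset.prod_mul_distrib, Finset.prod_const,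
      Finset.card_univ, Fintype.card_fin, Finset.prod_comm]
    rw [key (a 1 / (n : F))]
    rw [Finset.prod_congr rfl fun k _ => key (a k)]
    rw [Finset.prod_mul_distrib, Finset.prod_const, Nat.card_Icc]
    have hcard : n - 1 + 1 - 2 = n - 2 := by omega
    rw [hcard, ← pow_mul]
    have hsign : (-1 : AlgebraicClosure F) ^ n * (-1 : AlgebraicClosure F) ^ (n * (n - 2)) = 1 := by
      rw [← pow_add]
      have : n + n * (n - 2) = n * (n - 1) := by
        have h2 : n - 1 = (n - 2) + 1 := by omega
        rw [h2]; ring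
      rw [this]
      have : n * (n - 1) = (n - 1) * ((n - 1) + 1) := by
        have : (n - 1) + 1 = n := by omega
        rw [this, Nat.mul_comm]
      rw [this]
      exact Even.neg_one_pow (Nat.even_mul_succ_self (n - 1))
    calc (n : AlgebraicClosure F) ^ n * ((-1 : AlgebraicClosure F) ^ n * φ (b + eval (a 1 / (n : F)) (Pab F n a 0))) *
          ((-1 : AlgebraicClosure F) ^ (n * (n - 2)) *
            ∏ k ∈ Finset.Icc 2 (n - 1), φ (b + eval (a k) (Pab F n a 0)))
        = ((-1 : AlgebraicClosure F) ^ n * (-1 : AlgebraicClosure F) ^ (n * (n - 2))) *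
          ((n : AlgebraicClosure F) ^ n * φ (b + eval (a 1 / (n : F)) (Pab F n a 0)) *
            ∏ k ∈ Finset.Icc 2 (n - 1), φ (b + eval (a k) (Pab F n a 0))) := by ring
      _ = (n : AlgebraicClosure F) ^ n * φ (b + eval (a 1 / (n : F)) (Pab F n a 0)) *
            ∏ k ∈ Finset.Icc 2 (n - 1), φ (b + eval (a k) (Pab F n a 0)) := by
          rw [hsign, one_mul]
      _ = _ := by
          rw [← map_prod φ, map_mul, map_mul, map_pow, map_natCast]
  -- combine with the sign lemma
  have hsp := sign_prod n r
  rw [hprod] at hsp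
  have hmm : ((-1 : AlgebraicClosure F) ^ (n * (n - 1) / 2)) *
      ((-1 : AlgebraicClosure F) ^ (n * (n - 1) / 2)) = 1 := by
    rw [← pow_add]; exact Even.neg_one_pow ⟨_, rfl⟩
  have hT : (∏ i : Fin n, ∏ j ∈ Finset.Ioi i, (r i - r j) ^ 2)
      = (-1 : AlgebraicClosure F) ^ (n * (n - 1) / 2) *
        φ ((n : F) ^ n * (b + eval (a 1 / (n : F)) (Pab F n a 0)) *
          ∏ k ∈ Finset.Icc 2 (n - 1), (b + eval (a k) (Pab F n a 0))) := by
    rw [hsp, ← mul_assoc, hmm, one_mul]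
  rw [hT]
  have hA : (n : F) ^ n * eval (a 1 / (n : F)) (Pab F n a 0) + (n : F) ^ n * b
      = (n : F) ^ n * (b + eval (a 1 / (n : F)) (Pab F n a 0)) := by ring
  have hB : ∏ i ∈ Finset.Icc 2 (n - 1), (eval (a i) (Pab F n a 0) + b)
      = ∏ k ∈ Finset.Icc 2 (n - 1), (b + eval (a k) (Pab F n a 0)) :=
    Finset.prod_congr rfl fun _ _ => add_comm _ _
  rw [hA, hB]
  simp only [map_mul, map_pow, map_neg, map_one, map_natCast, map_prod]
  ring
end

section
/- Let n ≥ 2 be an integer and let a_1, …, a_{n−1} be integers such that n−1 divides a_1 and n! divides a_i for each i with 2 ≤ i ≤ n−1. Then the polynomial P_{a,0} ∈ ℚ[x] has integer coefficients. -/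
open Polynomial

theorem Pab_integer_coefficients (n : ℕ) (hn : 2 ≤ n) (a : ℕ → ℤ)
    (h1 : ((n : ℤ) - 1) ∣ a 1)
    (h2 : ∀ i, 2 ≤ i → i ≤ n - 1 → (n.factorial : ℤ) ∣ a i) :
    ∀ m : ℕ, ∃ z : ℤ, (Pab ℚ n (fun i => (a i : ℚ)) 0).coeff m = (z : ℚ) := by
  set M : ℕ := n.factorial with hM
  have hM0 : (M : ℤ) ≠ 0 := by positivity
  set RZ : Polynomial ℤ := ∏ i ∈ Finset.Icc 2 (n - 1), (X - C (a i)) with hRZ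
  set QZ : Polynomial ℤ := (C (n : ℤ) * X - C (a 1)) * RZ with hQZ
  -- degree of RZ
  have hcard : (Finset.Icc 2 (n - 1)).card = n - 2 := by
    rw [Nat.card_Icc]; omega
  have hRdeg : RZ.natDegree = n - 2 := by
    rw [hRZ, natDegree_prod _ _ (fun i _ => X_sub_C_ne_zero _)]
    simp only [natDegree_X_sub_C]
    rw [Finset.sum_const, hcard, smul_eq_mul, mul_one]
  have hRmonic : RZ.Monic := monic_prod_of_monic _ _ (fun i _ => monic_X_sub_C _)
  -- coefficients of RZ below n-2 are divisible by M
  have hRmap : RZ.map (Int.castRingHom (ZMod M)) = X ^ (n - 2) := by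
    rw [hRZ, Polynomial.map_prod]
    have : ∀ i ∈ Finset.Icc 2 (n - 1),
        (X - C (a i)).map (Int.castRingHom (ZMod M)) = X := by
      intro i hi
      simp only [Finset.mem_Icc] at hi
      rw [Polynomial.map_sub, map_X, map_C]
      have : ((a i : ℤ) : ZMod M) = 0 := by
        rw [ZMod.intCast_zmod_eq_zero_iff_dvd]
        exact h2 i hi.1 hi.2
      simp [this]
    rw [Finset.prod_congr rfl this, Finset.prod_const, hcard]
  have hRdvd : ∀ k, k < n - 2 → (M : ℤ) ∣ RZ.coeff k := by
    intro k hk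
    have := congrArg (fun p => Polynomial.coeff p k) hRmap
    simp only [coeff_map, coeff_X_pow] at this
    rw [if_neg (by omega)] at this
    rwa [← ZMod.intCast_zmod_eq_zero_iff_dvd]
  have hRtop : RZ.coeff (n - 2) = 1 := by
    have := hRmonic.coeff_natDegree
    rwa [hRdeg] at this
  have hRhigh : ∀ k, n - 2 < k → RZ.coeff k = 0 := by
    intro k hk
    exact coeff_eq_zero_of_natDegree_lt (hRdeg ▸ hk)
  -- key divisibility
  have hQdvd : ∀ k : ℕ, ((k : ℤ) + 1) ∣ QZ.coeff k := by
    intro k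
    match k with
    | 0 => simp
    | j + 1 =>
      have hcoeff : QZ.coeff (j + 1) = n * RZ.coeff j - a 1 * RZ.coeff (j + 1) := by
        rw [hQZ, sub_mul, mul_assoc]
        simp [coeff_X_mul]
      rw [hcoeff]
      have hcast : ((j + 1 : ℕ) : ℤ) + 1 = ((j + 2 : ℕ) : ℤ) := by push_cast; ring
      rw [hcast]
      rcases lt_trichotomy (j + 1) (n - 2) with h | h | h
      · -- both coefficients divisible by M, and (j+2) ∣ M
        have d1 : (M : ℤ) ∣ RZ.coeff j := hRdvd j (by omega)
        have d2 : (M : ℤ) ∣ RZ.coeff (j + 1) := hRdvd (j + 1) h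
        have dM : ((j + 2 : ℕ) : ℤ) ∣ (M : ℤ) := by
          exact_mod_cast Int.natCast_dvd_natCast.mpr (Nat.dvd_factorial (by omega) (by omega))
        exact dvd_sub (dM.trans (Dvd.dvd.mul_left d1 _)) (dM.trans (Dvd.dvd.mul_left d2 _))
      · -- j + 1 = n - 2
        have hj : j = n - 3 := by omega
        have hn3 : 3 ≤ n := by omega
        have d1 : (M : ℤ) ∣ RZ.coeff j := hRdvd j (by omega)
        have hR1 : RZ.coeff (j + 1) = 1 := by rw [h]; exact hRtop
        rw [hR1, mul_one]
        have hcast2 : ((j + 2 : ℕ) : ℤ) = ((n - 1 : ℕ) : ℤ) := by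
          congr 1; omega
        rw [hcast2]
        have dM : ((n - 1 : ℕ) : ℤ) ∣ (M : ℤ) := by
          exact_mod_cast Int.natCast_dvd_natCast.mpr (Nat.dvd_factorial (by omega) (by omega))
        have ha1 : ((n - 1 : ℕ) : ℤ) ∣ a 1 := by
          have : ((n - 1 : ℕ) : ℤ) = (n : ℤ) - 1 := by push_cast [Nat.cast_sub (by omega : 1 ≤ n)]; ring
          rw [this]; exact h1
        exact dvd_sub (dM.trans (Dvd.dvd.mul_left d1 _)) ha1
      · -- j + 1 > n - 2
        rcases eq_or_lt_of_le (Nat.succ_le_of_lt h) with h' | h'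
        · -- j = n - 2 : coeff = n
          have hj : j = n - 2 := by omega
          rw [hj, hRtop, hRhigh (n - 2 + 1) (by omega), mul_one, mul_zero, sub_zero]
          have hh : ((n - 2 + 2 : ℕ) : ℤ) = (n : ℤ) := by omega
          rw [hh]
        · rw [hRhigh j (by omega), hRhigh (j + 1) (by omega), mul_zero, mul_zero, sub_zero]
          exact dvd_zero _
  -- Qa is the image of QZ
  have hmap : QZ.map (Int.castRingHom ℚ) = Qa ℚ n (fun i => (a i : ℚ)) := by
    rw [hQZ, hRZ, Qa, Polynomial.map_mul, Polynomial.map_prod]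
    congr 1
    · rw [Polynomial.map_sub, Polynomial.map_mul, map_X, map_C, map_C]
      have hn0 : (n : ℚ) ≠ 0 := by positivity
      rw [mul_sub, ← C_mul]
      congr 1
      rw [mul_div_cancel₀ _ hn0]
      rfl
    · refine Finset.prod_congr rfl fun i _ => ?_
      rw [Polynomial.map_sub, map_X, map_C]
      simp
  have hcoeffQ : ∀ k, (Qa ℚ n (fun i => (a i : ℚ))).coeff k = ((QZ.coeff k : ℤ) : ℚ) := by
    intro k
    rw [← hmap, coeff_map]
    rfl
  -- now compute coefficients of Pab
  intro m
  match m with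
  | 0 =>
    refine ⟨0, ?_⟩
    simp [Pab, Polynomial.finset_sum_coeff, coeff_C_mul, coeff_X_pow]
  | j + 1 =>
    have hco : (Pab ℚ n (fun i => (a i : ℚ)) 0).coeff (j + 1) =
        ∑ i ∈ Finset.range ((Qa ℚ n (fun i => (a i : ℚ))).natDegree + 1),
          (if j = i then (Qa ℚ n (fun i => (a i : ℚ))).coeff i / ((i : ℚ) + 1) else 0) := by
      simp only [Pab, coeff_add, coeff_C, if_neg (Nat.succ_ne_zero j),
        Polynomial.finset_sum_coeff, coeff_C_mul, coeff_X_pow]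
      rw [zero_add]
      refine Finset.sum_congr rfl fun i _ => ?_
      by_cases h : j = i
      · simp [h]
      · rw [if_neg (by omega), if_neg h, mul_zero]
    rw [hco, Finset.sum_ite_eq (Finset.range _) j]
    by_cases hj : j ∈ Finset.range ((Qa ℚ n (fun i => (a i : ℚ))).natDegree + 1)
    · rw [if_pos hj]
      obtain ⟨z, hz⟩ := hQdvd j
      refine ⟨z, ?_⟩
      rw [hcoeffQ, hz]
      push_cast
      field_simp
    · rw [if_neg hj]
      exact ⟨0, by simp⟩
end
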